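/- (Upper bound lemma.) Let A be a solution of the proto-cell ODE and suppose there exists ε > 0 such that A_i(t) ≥ ε for all t ≥ 0 and all i ∈ S_me. Then for every moiety combination b, the quantity bᵀA(t) is bounded above on [0,∞). In particular, if the network is conservative with mass vector m (all components strictly positive, mᵀS = 0), the cytoplasmic density D(t) = mᵀA(t) is bounded on [0,∞). -/

import Mathlib

open Matrix Filter

/-- Fencing helper: if `x` has right derivative `x'` on `[0,∞)`, `x 0 ≤ M`, and
`x' t < 0` whenever `x t = M`, then `x t ≤ M` for all `t ≥ 0`. -/
lemma bounded_of_right_deriv (x x' : ℝ → ℝ)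
    (hx : ∀ t ≥ (0:ℝ), HasDerivWithinAt x (x' t) (Set.Ici 0) t)
    (M : ℝ) (h0 : x 0 ≤ M)
    (hM : ∀ t ≥ (0:ℝ), x t = M → x' t < 0) :
    ∀ t ≥ (0:ℝ), x t ≤ M := by
  intro t ht
  have key : ∀ ⦃s⦄, s ∈ Set.Icc (0:ℝ) t → x s ≤ (fun _ : ℝ => M) s :=
    image_le_of_deriv_right_lt_deriv_boundary' (f' := x') (B := fun _ => M)
      (B' := fun _ => (0:ℝ))
      (fun s hs => ((hx s hs.1).mono (Set.Icc_subset_Ici_self)).continuousWithinAt)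
      (fun s hs => ((hx s hs.1).mono (Set.Ici_subset_Ici.2 hs.1)))
      h0 continuousOn_const (fun s _ => hasDerivWithinAt_const s _ M)
      (fun s hs hsM => hM s hs.1 hsM)
  exact key ⟨ht, le_rfl⟩

/-- Upper bound lemma: if all species of `S_me` stay above some `ε > 0`
along a proto-cell trajectory, then `bᵀA(t)` is bounded above for every moiety
combination `b`; in particular the density `mᵀA(t)` is bounded for any mass vector. -/
theorem protocell_moiety_upper_bound
    (N R : ℕ) (S : Matrix (Fin N) (Fin R) ℝ)
    (f : (Fin N → ℝ) → Fin R → ℝ) (hf_cont : Continuous f)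
    (hf_nonneg : ∀ x : Fin N → ℝ, (∀ i, 0 ≤ x i) → ∀ j, 0 ≤ f x j)
    (me : Fin N) (Sme : Finset (Fin N)) (hme : me ∈ Sme)
    (Cme : ℝ) (hCme : 0 < Cme)
    (fme : (Fin N → ℝ) → ℝ) (hfme_cont : Continuous fme)
    (hfme_nonneg : ∀ x : Fin N → ℝ, (∀ i, 0 ≤ x i) → 0 ≤ fme x)
    (hfme_mono : ∀ x y : Fin N → ℝ, (∀ i, x i ≤ y i) → fme x ≤ fme y)
    (hfme_pos : ∀ x : Fin N → ℝ, (∀ i, 0 ≤ x i) → (0 < fme x ↔ ∀ i ∈ Sme, 0 < x i))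
    (Snu : Finset (Fin N)) (fnu : Fin N → ℝ)
    (hfnu_nonneg : ∀ i, 0 ≤ fnu i) (hfnu_supp : ∀ i ∉ Snu, fnu i = 0)
    (A : ℝ → Fin N → ℝ)
    (hA_nonneg : ∀ t ≥ (0:ℝ), ∀ i, 0 ≤ A t i)
    (hODE : ∀ t ≥ (0:ℝ), HasDerivWithinAt A
      (S.mulVec (f (A t)) + fnu - fme (A t) • (Pi.single me 1 : Fin N → ℝ)
        - (fme (A t) / Cme) • A t) (Set.Ici 0) t)
    (ε : ℝ) (hε : 0 < ε)
    (hlow : ∀ t ≥ (0:ℝ), ∀ i ∈ Sme, ε ≤ A t i) :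
    (∀ b : Fin N → ℝ, b ≠ 0 → (∀ i, 0 ≤ b i) → Matrix.vecMul b S = 0 →
      ∃ M : ℝ, ∀ t ≥ (0:ℝ), b ⬝ᵥ A t ≤ M) ∧
    (∀ m : Fin N → ℝ, (∀ i, 0 < m i) → Matrix.vecMul m S = 0 →
      ∃ M : ℝ, ∀ t ≥ (0:ℝ), |m ⬝ᵥ A t| ≤ M) := by
  -- lower bound on fme along the trajectory
  set y : Fin N → ℝ := fun i => if i ∈ Sme then ε else 0 with hy
  have hy_nonneg : ∀ i, 0 ≤ y i := by
    intro i; simp only [hy]; split <;> [exact hε.le; exact le_rfl]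
  have hc_pos : 0 < fme y := by
    rw [hfme_pos y hy_nonneg]
    intro i hi; simp [hy, hi, hε]
  have hfme_lb : ∀ t ≥ (0:ℝ), fme y ≤ fme (A t) := by
    intro t ht
    apply hfme_mono
    intro i
    simp only [hy]
    split
    · exact hlow t ht i (by assumption)
    · exact hA_nonneg t ht i
  set c : ℝ := fme y with hc
  -- main bound for a nonnegative moiety combination
  have main : ∀ b : Fin N → ℝ, (∀ i, 0 ≤ b i) → Matrix.vecMul b S = 0 →
      ∃ M : ℝ, ∀ t ≥ (0:ℝ), b ⬝ᵥ A t ≤ M := by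
    intro b hb hbS
    set K : ℝ := b ⬝ᵥ fnu with hK
    have hK_nonneg : 0 ≤ K := Finset.sum_nonneg fun i _ =>
      mul_nonneg (hb i) (hfnu_nonneg i)
    set M : ℝ := max (b ⬝ᵥ A 0) (Cme * (K + 1) / c) with hMdef
    refine ⟨M, ?_⟩
    set x' : ℝ → ℝ := fun t => K - fme (A t) * b me - (fme (A t) / Cme) * (b ⬝ᵥ A t)
      with hx'
    apply bounded_of_right_deriv (fun t => b ⬝ᵥ A t) x'
    · -- derivative computation
      intro t ht
      have hderiv := hODE t ht
      have hcomp : ∀ i : Fin N, HasDerivWithinAt (fun s => A s i)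
          ((S.mulVec (f (A t)) + fnu - fme (A t) • (Pi.single me 1 : Fin N → ℝ)
            - (fme (A t) / Cme) • A t) i) (Set.Ici 0) t :=
        hasDerivWithinAt_pi.1 hderiv
      have hsum : HasDerivWithinAt (fun s => b ⬝ᵥ A s)
          (b ⬝ᵥ (S.mulVec (f (A t)) + fnu - fme (A t) • (Pi.single me 1 : Fin N → ℝ)
            - (fme (A t) / Cme) • A t)) (Set.Ici 0) t := by
        simp only [dotProduct]
        exact HasDerivWithinAt.fun_sum fun i _ => (hcomp i).const_mul (b i)
      convert hsum using 1
      have h1 : b ⬝ᵥ S.mulVec (f (A t)) = 0 := by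
        rw [Matrix.dotProduct_mulVec, hbS, zero_dotProduct]
      have h2 : b ⬝ᵥ (fme (A t) • (Pi.single me 1 : Fin N → ℝ)) = fme (A t) * b me := by
        rw [dotProduct_smul]
        simp [dotProduct, Pi.single_apply, mul_comm]
      have h3 : b ⬝ᵥ ((fme (A t) / Cme) • A t) = (fme (A t) / Cme) * (b ⬝ᵥ A t) := by
        rw [dotProduct_smul]; rfl
      rw [hx']
      rw [show b ⬝ᵥ (S.mulVec (f (A t)) + fnu - fme (A t) • (Pi.single me 1 : Fin N → ℝ)
            - (fme (A t) / Cme) • A t)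
          = b ⬝ᵥ S.mulVec (f (A t)) + b ⬝ᵥ fnu
            - b ⬝ᵥ (fme (A t) • (Pi.single me 1 : Fin N → ℝ))
            - b ⬝ᵥ ((fme (A t) / Cme) • A t) by
        simp [dotProduct_sub, dotProduct_add]]
      rw [h1, h2, h3, hK]
      ring
    · exact le_max_left _ _
    · -- strict negativity of the derivative at the boundary
      intro t ht hxt
      have hMc : Cme * (K + 1) / c ≤ M := le_max_right _ _
      have hM_pos : 0 < M := lt_of_lt_of_le
        (by positivity) hMc
      have hfl := hfme_lb t ht
      have h1 : K + 1 ≤ (c / Cme) * M := by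
        rw [div_mul_eq_mul_div, le_div_iff₀ hCme]
        calc (K + 1) * Cme = c * (Cme * (K + 1) / c) := by
              field_simp
        _ ≤ c * M := by
              exact mul_le_mul_of_nonneg_left hMc hc_pos.le
      have h2 : (c / Cme) * M ≤ (fme (A t) / Cme) * M := by
        apply mul_le_mul_of_nonneg_right _ hM_pos.le
        gcongr
      have h3 : 0 ≤ fme (A t) * b me :=
        mul_nonneg (hfme_nonneg _ (hA_nonneg t ht)) (hb me)
      simp only [hx', hxt]
      nlinarith
  constructor
  · exact fun b _ hb hbS => main b hb hbS
  · intro m hm hmS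
    obtain ⟨M, hMb⟩ := main m (fun i => (hm i).le) hmS
    refine ⟨M, fun t ht => ?_⟩
    have hnn : 0 ≤ m ⬝ᵥ A t := Finset.sum_nonneg fun i _ =>
      mul_nonneg (hm i).le (hA_nonneg t ht i)
    rw [abs_of_nonneg hnn]
    exact hMb t ht
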